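/- Let (X, μ) be a measurable space with a finite measure μ, F : X → X a measurable map with μ invariant (μ(F⁻¹ M) = μ(M) for every measurable M), and γ : X → ℝ a measurable function such that the sums s_n(x) = ∑_{k=0}^{n} γ(F^k x) are uniformly bounded: sup_{n,x} |s_n(x)| < ∞. Then φ(x) = sup_n (−s_n(x)) is a bounded measurable function satisfying φ(F x) − φ(x) = γ(x) for μ-almost every x ∈ X. -/

import Mathlib

open MeasureTheory

/-- For a finite invariant measure `μ`, a measurable `F` and a measurable
`γ` with uniformly bounded sums `s_n`, the function `φ(x) = sup_n (−s_n(x))` is a bounded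
measurable solution of the cohomological equation almost everywhere. -/
theorem sup_is_ae_solution
    {X : Type*} [MeasurableSpace X] (μ : Measure X) [IsFiniteMeasure μ]
    (F : X → X) (hF : Measurable F)
    (hinv : ∀ M : Set X, MeasurableSet M → μ (F ⁻¹' M) = μ M)
    (γ : X → ℝ) (hγ : Measurable γ)
    (hbdd : ∃ C : ℝ, ∀ (n : ℕ) (x : X), |∑ k ∈ Finset.range (n + 1), γ (F^[k] x)| ≤ C)
    (φ : X → ℝ)
    (hφ : ∀ x, φ x = ⨆ n : ℕ, -(∑ k ∈ Finset.range (n + 1), γ (F^[k] x))) :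
    Measurable φ ∧ (∃ C : ℝ, ∀ x, |φ x| ≤ C) ∧
    ∀ᵐ x ∂μ, φ (F x) - φ x = γ x := by
  obtain ⟨C, hC⟩ := hbdd
  set s : ℕ → X → ℝ := fun n x => ∑ k ∈ Finset.range (n + 1), γ (F^[k] x) with hs
  have hsm : ∀ n, Measurable (s n) := fun n =>
    Finset.measurable_sum _ fun k _ => hγ.comp (hF.iterate k)
  have hφ' : φ = fun x => ⨆ n : ℕ, -(s n x) := funext hφ
  have hφm : Measurable φ := by
    rw [hφ']; exact Measurable.iSup fun n => (hsm n).neg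
  have hbddA : ∀ x, BddAbove (Set.range fun n : ℕ => -(s n x)) := fun x =>
    ⟨C, by rintro y ⟨n, rfl⟩; have := abs_le.1 (hC n x); simp only; linarith [this.1]⟩
  have hφ_le : ∀ x, |φ x| ≤ C := by
    intro x
    rw [hφ x, abs_le]
    constructor
    · have h0 : -(s 0 x) ≤ ⨆ n : ℕ, -(s n x) := le_ciSup (hbddA x) 0
      have := abs_le.1 (hC 0 x)
      linarith
    · exact ciSup_le fun n => by have := abs_le.1 (hC n x); linarith
  refine ⟨hφm, ⟨C, hφ_le⟩, ?_⟩
  -- ψ is the sup over shifted indices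
  set ψ : X → ℝ := fun x => ⨆ n : ℕ, -(s (n + 1) x) with hψ
  have hbddB : ∀ x, BddAbove (Set.range fun n : ℕ => -(s (n + 1) x)) := fun x =>
    ⟨C, by rintro y ⟨n, rfl⟩; have := abs_le.1 (hC (n + 1) x); simp only; linarith [this.1]⟩
  have hψm : Measurable ψ := Measurable.iSup fun n => (hsm (n + 1)).neg
  have hψ_le : ∀ x, |ψ x| ≤ C := by
    intro x
    rw [abs_le]
    constructor
    · have h0 : -(s 1 x) ≤ ψ x := le_ciSup (hbddB x) 0
      have := abs_le.1 (hC 1 x)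
      linarith
    · exact ciSup_le fun n => by have := abs_le.1 (hC (n + 1) x); linarith
  -- key pointwise identities
  have hsF : ∀ n x, s n (F x) = s (n + 1) x - γ x := by
    intro n x
    have h1 : s (n + 1) x = (∑ k ∈ Finset.range (n + 1), γ (F^[k + 1] x)) + γ (F^[0] x) :=
      Finset.sum_range_succ' _ _
    have h2 : s n (F x) = ∑ k ∈ Finset.range (n + 1), γ (F^[k + 1] x) := by
      apply Finset.sum_congr rfl
      intro k _
      rw [Function.iterate_succ_apply]
    simp only [Function.iterate_zero_apply] at h1
    rw [h2]; linarith
  have hkey : ∀ x, φ (F x) = γ x + ψ x := by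
    intro x
    rw [hφ (F x)]
    have : (fun n : ℕ => -(s n (F x))) = fun n : ℕ => γ x + -(s (n + 1) x) := by
      funext n; rw [hsF n x]; ring
    rw [show (⨆ n : ℕ, -(s n (F x))) = ⨆ n : ℕ, (γ x + -(s (n + 1) x)) by rw [this]]
    rw [← add_ciSup (hbddB x) (γ x)]
  have hψ_le_φ : ∀ x, ψ x ≤ φ x := by
    intro x
    rw [hφ x]
    exact ciSup_le fun n => le_ciSup (hbddA x) (n + 1)
  -- invariance of the measure and of integrals
  have hmap : μ.map F = μ := by
    ext M hM
    rw [Measure.map_apply hF hM, hinv M hM]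
  have hint : ∀ g : X → ℝ, Measurable g → ∫ x, g (F x) ∂μ = ∫ x, g x ∂μ := by
    intro g hg
    rw [← integral_map hF.aemeasurable hg.aestronglyMeasurable, hmap]
  -- integrability of bounded measurable functions
  have hintg : ∀ g : X → ℝ, Measurable g → (∀ x, |g x| ≤ C) → Integrable g μ := by
    intro g hg hb
    exact ⟨hg.aestronglyMeasurable,
      HasFiniteIntegral.of_bounded (C := C) (ae_of_all _ fun x => by
        simpa [Real.norm_eq_abs] using hb x)⟩
  have hγ_bd : ∀ x, |γ x| ≤ C := by
    intro x
    have := hC 0 x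
    simpa using this
  have hγi : Integrable γ μ := hintg γ hγ hγ_bd
  have hφi : Integrable φ μ := hintg φ hφm hφ_le
  have hψi : Integrable ψ μ := hintg ψ hψm hψ_le
  -- the integral of γ vanishes
  have hIk : ∀ k : ℕ, ∫ x, γ (F^[k] x) ∂μ = ∫ x, γ x ∂μ := by
    intro k
    induction k with
    | zero => simp
    | succ k ih =>
      simp_rw [Function.iterate_succ_apply]
      rw [hint (fun x => γ (F^[k] x)) (hγ.comp (hF.iterate k))]
      exact ih
  have hiter_bd : ∀ k : ℕ, ∀ x, |γ (F^[k] x)| ≤ C := fun k x => hγ_bd _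
  have hsn : ∀ n : ℕ, ∫ x, s n x ∂μ = ((n : ℝ) + 1) * ∫ x, γ x ∂μ := by
    intro n
    rw [hs]
    simp only
    rw [integral_finset_sum (Finset.range (n + 1)) (f := fun k x => γ (F^[k] x))
      (fun k _ => hintg (fun x => γ (F^[k] x)) (hγ.comp (hF.iterate k)) (hiter_bd k))]
    simp_rw [hIk]
    rw [Finset.sum_const, Finset.card_range, nsmul_eq_mul]
    push_cast
    ring
  have hsbd : ∀ n : ℕ, |∫ x, s n x ∂μ| ≤ C * (μ Set.univ).toReal := by
    intro n
    have := norm_integral_le_of_norm_le_const (μ := μ) (f := s n) (C := C)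
      (ae_of_all _ fun x => by simpa [Real.norm_eq_abs] using hC n x)
    simpa [Real.norm_eq_abs, Measure.real] using this
  have hI0 : ∫ x, γ x ∂μ = 0 := by
    by_contra h
    have habs : 0 < |∫ x, γ x ∂μ| := abs_pos.2 h
    obtain ⟨n, hn⟩ := exists_nat_gt ((C * (μ Set.univ).toReal) / |∫ x, γ x ∂μ|)
    have h1 : ((n : ℝ) + 1) * |∫ x, γ x ∂μ| ≤ C * (μ Set.univ).toReal := by
      have := hsbd n
      rw [hsn n, abs_mul, abs_of_pos (by positivity : (0:ℝ) < (n : ℝ) + 1)] at this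
      exact this
    rw [div_lt_iff₀ habs] at hn
    nlinarith
  -- conclude: u = φ - ψ is nonnegative with zero integral
  have hu_int : Integrable (fun x => φ x - ψ x) μ := hφi.sub hψi
  have hu_nonneg : ∀ x, 0 ≤ φ x - ψ x := fun x => by linarith [hψ_le_φ x]
  have hiφF : ∫ x, φ (F x) ∂μ = ∫ x, φ x ∂μ := hint φ hφm
  have hiφF' : ∫ x, φ (F x) ∂μ = ∫ x, γ x ∂μ + ∫ x, ψ x ∂μ := by
    simp_rw [hkey]
    exact integral_add hγi hψi
  have hu_zero : ∫ x, (φ x - ψ x) ∂μ = 0 := by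
    rw [integral_sub hφi hψi]
    rw [hiφF'] at hiφF
    rw [hI0] at hiφF
    linarith
  have := (integral_eq_zero_iff_of_nonneg hu_nonneg hu_int).1 hu_zero
  filter_upwards [this] with x hx
  have hx0 : φ x - ψ x = 0 := hx
  have := hkey x
  linarith
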